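/- arXiv:0711.1769 — 2 statements merged into one kernel-verified Lean document; each statement's English description precedes it below -/
import Mathlib

section
/- Let S = k[x_1,…,x_n] be a polynomial ring over a field k and let I be a constructible monomial ideal of S generated in degree q. Then I has a q-linear resolution. -/
open MvPolynomial

/-- The recursive definition of a constructible monomial ideal generated in degree `q`:
(i) any principal monomial ideal is constructible (in the degree of its generator);
(ii) if `I₁`, `I₂` are constructible ideals generated in degree `q` and `I₁ ⊓ I₂` is a
constructible ideal generated in degree `q + 1`, then `I₁ + I₂` is constructible. -/
inductive IsConstructibleIdeal (k : Type) [Field k] {σ : Type} :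
    Ideal (MvPolynomial σ k) → ℕ → Prop
  | principal (b : σ →₀ ℕ) :
      IsConstructibleIdeal k (Ideal.span {monomial b (1 : k)}) (b.sum fun _ e => e)
  | sum (I₁ I₂ : Ideal (MvPolynomial σ k)) (q : ℕ) :
      IsConstructibleIdeal k I₁ q → IsConstructibleIdeal k I₂ q →
      IsConstructibleIdeal k (I₁ ⊓ I₂) (q + 1) →
      IsConstructibleIdeal k (I₁ + I₂) q

/-- `I` has a `q`-linear resolution: there is a graded free resolution
`⋯ → F_{i+1} → F_i → ⋯ → F_0 → I → 0` in which `F_i` is free with basis in degree `q + i`,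
i.e. the augmentation sends basis elements to homogeneous polynomials of degree `q` and all
matrix entries of the differentials are homogeneous (linear forms) of degree `1`. -/
def HasLinearResolution (n : ℕ) (k : Type) [Field k]
    (I : Ideal (MvPolynomial (Fin n) k)) (q : ℕ) : Prop :=
  ∃ (ι : ℕ → Type)
    (d : ∀ i, ((ι (i + 1)) →₀ MvPolynomial (Fin n) k) →ₗ[MvPolynomial (Fin n) k]
      ((ι i) →₀ MvPolynomial (Fin n) k))
    (ε : ((ι 0) →₀ MvPolynomial (Fin n) k) →ₗ[MvPolynomial (Fin n) k] MvPolynomial (Fin n) k),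
      LinearMap.range ε = I ∧
      (∀ j : ι 0, (ε (Finsupp.single j 1)).IsHomogeneous q) ∧
      (∀ i (j : ι (i + 1)) (j' : ι i), ((d i (Finsupp.single j 1)) j').IsHomogeneous 1) ∧
      (∀ i, LinearMap.range (d (i + 1)) = LinearMap.ker (d i)) ∧
      LinearMap.range (d 0) = LinearMap.ker ε

namespace LinResAux

variable {k : Type} [Field k] {σ : Type}

theorem isHom_neg {p : MvPolynomial σ k} {e : ℕ} (hp : p.IsHomogeneous e) :
    (-p).IsHomogeneous e := by
  rw [← mem_homogeneousSubmodule] at hp ⊢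
  exact neg_mem hp

theorem hc_of_isHom {p : MvPolynomial σ k} {e : ℕ} (hp : p.IsHomogeneous e) :
    homogeneousComponent e p = p := by
  rw [homogeneousComponent_of_mem ((mem_homogeneousSubmodule _ _).2 hp), if_pos rfl]

theorem hc_mul {h : MvPolynomial σ k} {e : ℕ} (hh : h.IsHomogeneous e) (m : ℕ)
    (c : MvPolynomial σ k) :
    homogeneousComponent (m + e) (c * h) = homogeneousComponent m c * h := by
  classical
  conv_lhs => rw [← sum_homogeneousComponent c]
  rw [Finset.sum_mul, map_sum]
  rw [Finset.sum_congr rfl (fun i _ => show homogeneousComponent (m + e)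
      (homogeneousComponent i c * h) = if m = i then homogeneousComponent i c * h else 0 by
    rw [homogeneousComponent_of_mem ((mem_homogeneousSubmodule _ _).2
      ((homogeneousComponent_isHomogeneous i c).mul hh))]
    simp only [add_left_inj])]
  rw [Finset.sum_ite_eq]
  by_cases hm : m ∈ Finset.range (c.totalDegree + 1)
  · rw [if_pos hm]
  · rw [if_neg hm, homogeneousComponent_eq_zero, zero_mul]
    simpa using Nat.lt_of_succ_le (not_lt.mp (by simpa [Finset.mem_range] using hm))


theorem apply_eq_sum {α : Type} {M : Type} [AddCommMonoid M] [Module (MvPolynomial σ k) M]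
    (T : (α →₀ MvPolynomial σ k) →ₗ[MvPolynomial σ k] M) (v : α →₀ MvPolynomial σ k) :
    T v = ∑ a ∈ v.support, v a • T (Finsupp.single a 1) := by
  conv_lhs => rw [← Finsupp.sum_single v]
  rw [map_finsuppSum, Finsupp.sum]
  refine Finset.sum_congr rfl fun a _ => ?_
  rw [show Finsupp.single a (v a) = (v a) • Finsupp.single a (1 : MvPolynomial σ k) by
    rw [Finsupp.smul_single, smul_eq_mul, mul_one], map_smul]

theorem coord_eq {α β : Type}
    (T : (α →₀ MvPolynomial σ k) →ₗ[MvPolynomial σ k] (β →₀ MvPolynomial σ k))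
    (v : α →₀ MvPolynomial σ k) (b : β) :
    (T v) b = ∑ a ∈ v.support, v a * (T (Finsupp.single a 1)) b := by
  rw [apply_eq_sum, Finsupp.finset_sum_apply]
  exact Finset.sum_congr rfl fun a _ => by rw [Finsupp.smul_apply, smul_eq_mul]

theorem scalar_eq {α : Type}
    (T : (α →₀ MvPolynomial σ k) →ₗ[MvPolynomial σ k] MvPolynomial σ k)
    (v : α →₀ MvPolynomial σ k) :
    T v = ∑ a ∈ v.support, v a * T (Finsupp.single a 1) := by
  rw [apply_eq_sum]; exact Finset.sum_congr rfl fun a _ => by rw [smul_eq_mul]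

theorem coord_isHom {α β : Type}
    (T : (α →₀ MvPolynomial σ k) →ₗ[MvPolynomial σ k] (β →₀ MvPolynomial σ k))
    (e : ℕ) (hT : ∀ a b, ((T (Finsupp.single a 1)) b).IsHomogeneous e)
    {m : ℕ} (v : α →₀ MvPolynomial σ k) (hv : ∀ a, (v a).IsHomogeneous m) (b : β) :
    ((T v) b).IsHomogeneous (m + e) := by
  rw [coord_eq]
  exact IsHomogeneous.sum _ _ _ fun a _ => (hv a).mul (hT a b)

theorem exists_hom_lift {α β : Type}
    (T : (α →₀ MvPolynomial σ k) →ₗ[MvPolynomial σ k] (β →₀ MvPolynomial σ k))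
    (e m : ℕ) (hT : ∀ a b, ((T (Finsupp.single a 1)) b).IsHomogeneous e)
    (w : β →₀ MvPolynomial σ k) (hw : w ∈ LinearMap.range T)
    (hwh : ∀ b, (w b).IsHomogeneous (m + e)) :
    ∃ v, T v = w ∧ ∀ a, (v a).IsHomogeneous m := by
  obtain ⟨v₀, rfl⟩ := hw
  refine ⟨Finsupp.mapRange (homogeneousComponent m) (map_zero _) v₀, ?_, fun a => by
    rw [Finsupp.mapRange_apply]; exact homogeneousComponent_isHomogeneous m _⟩
  refine Finsupp.ext fun b => ?_
  rw [coord_eq, Finset.sum_subset Finsupp.support_mapRange (fun a _ ha => by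
    rw [Finsupp.notMem_support_iff.mp ha, zero_mul])]
  calc ∑ a ∈ v₀.support,
        (Finsupp.mapRange (homogeneousComponent m) (map_zero _) v₀) a * (T (Finsupp.single a 1)) b
      = ∑ a ∈ v₀.support, homogeneousComponent (m + e) (v₀ a * (T (Finsupp.single a 1)) b) :=
        Finset.sum_congr rfl fun a _ => by
          rw [Finsupp.mapRange_apply, hc_mul (hT a b)]
    _ = homogeneousComponent (m + e) ((T v₀) b) := by rw [← map_sum, ← coord_eq]
    _ = (T v₀) b := hc_of_isHom (hwh b)

theorem exists_hom_lift_scalar {α : Type}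
    (T : (α →₀ MvPolynomial σ k) →ₗ[MvPolynomial σ k] MvPolynomial σ k)
    (e m : ℕ) (hT : ∀ a, (T (Finsupp.single a 1)).IsHomogeneous e)
    (w : MvPolynomial σ k) (hw : w ∈ LinearMap.range T)
    (hwh : w.IsHomogeneous (m + e)) :
    ∃ v, T v = w ∧ ∀ a, (v a).IsHomogeneous m := by
  obtain ⟨v₀, rfl⟩ := hw
  refine ⟨Finsupp.mapRange (homogeneousComponent m) (map_zero _) v₀, ?_, fun a => by
    rw [Finsupp.mapRange_apply]; exact homogeneousComponent_isHomogeneous m _⟩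
  rw [scalar_eq, Finset.sum_subset Finsupp.support_mapRange (fun a _ ha => by
    rw [Finsupp.notMem_support_iff.mp ha, zero_mul])]
  calc ∑ a ∈ v₀.support,
        (Finsupp.mapRange (homogeneousComponent m) (map_zero _) v₀) a * T (Finsupp.single a 1)
      = ∑ a ∈ v₀.support, homogeneousComponent (m + e) (v₀ a * T (Finsupp.single a 1)) :=
        Finset.sum_congr rfl fun a _ => by
          rw [Finsupp.mapRange_apply, hc_mul (hT a)]
    _ = homogeneousComponent (m + e) (T v₀) := by rw [← map_sum, ← scalar_eq]
    _ = T v₀ := hc_of_isHom hwh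

theorem exists_seq {T : ℕ → Type} {P : ∀ i, T i → Prop} {Q : ∀ i, T i → T (i + 1) → Prop}
    (h0 : ∃ t, P 0 t) (hs : ∀ i t, P i t → ∃ t', P (i + 1) t' ∧ Q i t t') :
    ∃ f : ∀ i, T i, (∀ i, P i (f i)) ∧ ∀ i, Q i (f i) (f (i + 1)) := by
  choose g hg1 hg2 using hs
  obtain ⟨t0, ht0⟩ := h0
  let f : ∀ i, {t : T i // P i t} := fun i =>
    Nat.rec ⟨t0, ht0⟩ (fun i p => ⟨g i p.1 p.2, hg1 i p.1 p.2⟩) i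
  exact ⟨fun i => (f i).1, fun i => (f i).2, fun i => hg2 i (f i).1 (f i).2⟩

theorem isHomZero {e : ℕ} : (0 : MvPolynomial σ k).IsHomogeneous e :=
  isHomogeneous_zero σ k e

theorem map_symm_eq_comap {R M N : Type} [CommRing R] [AddCommGroup M] [Module R M]
    [AddCommGroup N] [Module R N] (e : M ≃ₗ[R] N) (K : Submodule R N) :
    Submodule.map e.symm.toLinearMap K = Submodule.comap e.toLinearMap K := by
  ext x
  simp only [Submodule.mem_map, Submodule.mem_comap]
  constructor
  · rintro ⟨y, hy, rfl⟩
    show e (e.symm y) ∈ K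
    rw [e.apply_symm_apply]
    exact hy
  · intro hx
    exact ⟨e.toLinearMap x, hx, by show e.symm (e x) = x; rw [e.symm_apply_apply]⟩

abbrev Kappa (ι : ℕ → Type) : ℕ → Type
  | 0 => Empty
  | i + 1 => ι i

set_option maxHeartbeats 2000000 in
theorem phi_exists {ιA ιC : ℕ → Type} (q : ℕ)
    (dA : ∀ i, ((ιA (i + 1)) →₀ MvPolynomial σ k) →ₗ[MvPolynomial σ k]
      ((ιA i) →₀ MvPolynomial σ k))
    (εA : ((ιA 0) →₀ MvPolynomial σ k) →ₗ[MvPolynomial σ k] MvPolynomial σ k)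
    (dC : ∀ i, ((ιC (i + 1)) →₀ MvPolynomial σ k) →ₗ[MvPolynomial σ k]
      ((ιC i) →₀ MvPolynomial σ k))
    (εC : ((ιC 0) →₀ MvPolynomial σ k) →ₗ[MvPolynomial σ k] MvPolynomial σ k)
    (hA2 : ∀ j, (εA (Finsupp.single j 1)).IsHomogeneous q)
    (hA3 : ∀ i j j', ((dA i (Finsupp.single j 1)) j').IsHomogeneous 1)
    (hA4 : ∀ i, LinearMap.range (dA (i + 1)) = LinearMap.ker (dA i))
    (hA5 : LinearMap.range (dA 0) = LinearMap.ker εA)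
    (hC2 : ∀ j, (εC (Finsupp.single j 1)).IsHomogeneous (q + 1))
    (hC3 : ∀ i j j', ((dC i (Finsupp.single j 1)) j').IsHomogeneous 1)
    (hC4 : ∀ i, LinearMap.range (dC (i + 1)) = LinearMap.ker (dC i))
    (hC5 : LinearMap.range (dC 0) = LinearMap.ker εC)
    (hle : LinearMap.range εC ≤ LinearMap.range εA) :
    ∃ φ : ∀ i, ((ιC i) →₀ MvPolynomial σ k) →ₗ[MvPolynomial σ k]
        ((ιA i) →₀ MvPolynomial σ k),
      (εA ∘ₗ φ 0 = εC) ∧ (∀ i, dA i ∘ₗ φ (i + 1) = φ i ∘ₗ dC i) ∧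
      (∀ i c a, ((φ i (Finsupp.single c 1)) a).IsHomogeneous 1) := by
  classical
  set R := MvPolynomial σ k with hR
  have hbase : ∃ F : ((ιC 0) →₀ R) →ₗ[R] ((ιA 0) →₀ R),
      (∀ c a, ((F (Finsupp.single c 1)) a).IsHomogeneous 1) ∧
      (∀ v ∈ LinearMap.range (dC 0), F v ∈ LinearMap.range (dA 0)) ∧
      (εA ∘ₗ F = εC) := by
    have hx : ∀ c : ιC 0, ∃ v, εA v = εC (Finsupp.single c 1) ∧
        ∀ a, (v a).IsHomogeneous 1 :=
      fun c => exists_hom_lift_scalar εA q 1 hA2 _ (hle (LinearMap.mem_range_self _ _))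
        (by rw [add_comm]; exact hC2 c)
    choose v hv1 hv2 using hx
    have hb : εA ∘ₗ Finsupp.linearCombination R v = εC := by
      refine Finsupp.lhom_ext fun c r => ?_
      calc εA (Finsupp.linearCombination R v (Finsupp.single c r))
          = εA (r • v c) := by rw [Finsupp.linearCombination_single]
        _ = r • εC (Finsupp.single c 1) := by rw [map_smul, hv1]
        _ = εC (Finsupp.single c r) := by
            rw [← map_smul, Finsupp.smul_single, smul_eq_mul, mul_one]
    refine ⟨Finsupp.linearCombination R v, fun c a => ?_, fun w hw => ?_, hb⟩
    · rw [Finsupp.linearCombination_single, one_smul]; exact hv2 c a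
    · rw [hA5, LinearMap.mem_ker, show εA (Finsupp.linearCombination R v w) = εC w from
        LinearMap.congr_fun hb w]
      rw [hC5] at hw
      exact hw
  have hstep : ∀ (i : ℕ) (F : ((ιC i) →₀ R) →ₗ[R] ((ιA i) →₀ R)),
      ((∀ c a, ((F (Finsupp.single c 1)) a).IsHomogeneous 1) ∧
        (∀ v ∈ LinearMap.range (dC i), F v ∈ LinearMap.range (dA i)) ∧
        (Nat.casesOn (motive := fun j => (((ιC j) →₀ R) →ₗ[R] ((ιA j) →₀ R)) → Prop) i
          (fun F0 => εA ∘ₗ F0 = εC) (fun _ _ => True)) F) →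
      ∃ F' : ((ιC (i + 1)) →₀ R) →ₗ[R] ((ιA (i + 1)) →₀ R),
        ((∀ c a, ((F' (Finsupp.single c 1)) a).IsHomogeneous 1) ∧
          (∀ v ∈ LinearMap.range (dC (i + 1)), F' v ∈ LinearMap.range (dA (i + 1))) ∧
          True) ∧
        (dA i ∘ₗ F' = F ∘ₗ dC i) := by
    intro i F hF
    have hx : ∀ c : ιC (i + 1), ∃ v, dA i v = F (dC i (Finsupp.single c 1)) ∧
        ∀ a, (v a).IsHomogeneous 1 :=
      fun c => exists_hom_lift (dA i) 1 1 (hA3 i) _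
        (hF.2.1 _ (LinearMap.mem_range_self _ _))
        (fun a => coord_isHom F 1 hF.1 _ (fun c' => hC3 i c c') a)
    choose v hv1 hv2 using hx
    have hchain : dA i ∘ₗ Finsupp.linearCombination R v = F ∘ₗ dC i := by
      refine Finsupp.lhom_ext fun c r => ?_
      calc dA i (Finsupp.linearCombination R v (Finsupp.single c r))
          = dA i (r • v c) := by rw [Finsupp.linearCombination_single]
        _ = r • F (dC i (Finsupp.single c 1)) := by rw [map_smul, hv1]
        _ = F (dC i (Finsupp.single c r)) := by
            rw [← map_smul, ← map_smul, Finsupp.smul_single, smul_eq_mul, mul_one]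
    refine ⟨Finsupp.linearCombination R v, ⟨fun c a => ?_, fun w hw => ?_, trivial⟩, hchain⟩
    · rw [Finsupp.linearCombination_single, one_smul]; exact hv2 c a
    · obtain ⟨u, rfl⟩ := hw
      rw [hA4, LinearMap.mem_ker]
      have h1 : dC i (dC (i + 1) u) = 0 :=
        LinearMap.mem_ker.mp (hC4 i ▸ LinearMap.mem_range_self (dC (i + 1)) u)
      rw [show dA i (Finsupp.linearCombination R v (dC (i + 1) u))
          = F (dC i (dC (i + 1) u)) from LinearMap.congr_fun hchain (dC (i + 1) u), h1, map_zero]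
  obtain ⟨φ, hP, hQ⟩ := exists_seq
    (T := fun i => ((ιC i) →₀ R) →ₗ[R] ((ιA i) →₀ R))
    (P := fun i F => (∀ c a, ((F (Finsupp.single c 1)) a).IsHomogeneous 1) ∧
      (∀ v ∈ LinearMap.range (dC i), F v ∈ LinearMap.range (dA i)) ∧
      (Nat.casesOn (motive := fun j => (((ιC j) →₀ R) →ₗ[R] ((ιA j) →₀ R)) → Prop) i
        (fun F0 => εA ∘ₗ F0 = εC) (fun _ _ => True)) F)
    (Q := fun i F F' => dA i ∘ₗ F' = F ∘ₗ dC i)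
    hbase hstep
  exact ⟨φ, (hP 0).2.2, hQ, fun i => (hP i).1⟩

end LinResAux

set_option maxHeartbeats 4000000 in
/-- Every constructible monomial ideal of `S = k[x₁,…,xₙ]` generated in degree `q`
has a `q`-linear resolution. -/
theorem constructible_ideal_has_linear_resolution (n : ℕ) (k : Type) [Field k]
    (I : Ideal (MvPolynomial (Fin n) k)) (q : ℕ)
    (h : IsConstructibleIdeal k I q) : HasLinearResolution n k I q := by
  induction h with
  | principal b =>
    classical
    refine ⟨fun i => Nat.casesOn i PUnit fun _ => Empty, fun _ => 0,
      Finsupp.linearCombination _ (fun _ : PUnit => monomial b (1 : k)), ?_, ?_, ?_, ?_, ?_⟩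
    · rw [Finsupp.range_linearCombination,
        show (Set.range fun _ : PUnit => (monomial b (1 : k))) = {monomial b (1 : k)} from
          Set.range_const]
    · intro j
      rw [Finsupp.linearCombination_single, one_smul]
      exact isHomogeneous_monomial _ rfl
    · intro i j j'
      simp only [LinearMap.zero_apply, Finsupp.coe_zero, Pi.zero_apply]
      exact LinResAux.isHomZero
    · intro i
      haveI : Subsingleton (((fun i => Nat.casesOn i PUnit fun _ => Empty : ℕ → Type) (i + 1)) →₀
          MvPolynomial (Fin n) k) :=
        inferInstanceAs (Subsingleton (Empty →₀ MvPolynomial (Fin n) k))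
      ext x
      have hx : x = 0 := Subsingleton.elim x 0
      subst hx
      simp
    · rw [LinearMap.range_zero]
      symm
      rw [LinearMap.ker_eq_bot']
      intro v hv
      have hv2 : v = Finsupp.single PUnit.unit (v PUnit.unit) :=
        Finsupp.unique_single (α := PUnit) v
      rw [hv2, Finsupp.linearCombination_single, smul_eq_mul, mul_eq_zero] at hv
      rcases hv with hv | hv
      · rw [hv2, hv, Finsupp.single_zero]
      · exact absurd (MvPolynomial.monomial_eq_zero.mp hv) one_ne_zero
  | sum I₁ I₂ q h₁ h₂ h₃ ih₁ ih₂ ih₃ =>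
    classical
    obtain ⟨ιA, dA, εA, hA1, hA2, hA3, hA4, hA5⟩ := ih₁
    obtain ⟨ιB, dB, εB, hB1, hB2, hB3, hB4, hB5⟩ := ih₂
    obtain ⟨ιC, dC, εC, hC1, hC2, hC3, hC4, hC5⟩ := ih₃
    obtain ⟨φA, hφA0, hφAc, hφAh⟩ := LinResAux.phi_exists q dA εA dC εC hA2 hA3 hA4 hA5
      hC2 hC3 hC4 hC5 (by rw [hC1, hA1]; exact inf_le_left)
    obtain ⟨φB, hφB0, hφBc, hφBh⟩ := LinResAux.phi_exists q dB εB dC εC hB2 hB3 hB4 hB5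
      hC2 hC3 hC4 hC5 (by rw [hC1, hB1]; exact inf_le_right)
    haveI hKtriv : Subsingleton ((LinResAux.Kappa ιC 0) →₀ MvPolynomial (Fin n) k) := by
      constructor
      intro a b
      ext x
      cases x
    obtain ⟨ρ, hρ0, hρS⟩ : ∃ ρ : ∀ i, ((ιC i) →₀ MvPolynomial (Fin n) k) →ₗ[MvPolynomial (Fin n) k]
          ((LinResAux.Kappa ιC i) →₀ MvPolynomial (Fin n) k),
        (ρ 0 = 0) ∧ (∀ j, ρ (j + 1) = -(dC j)) :=
      ⟨fun i => Nat.casesOn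
        (motive := fun i => ((ιC i) →₀ MvPolynomial (Fin n) k) →ₗ[MvPolynomial (Fin n) k]
          ((LinResAux.Kappa ιC i) →₀ MvPolynomial (Fin n) k)) i 0 (fun j => -(dC j)),
        rfl, fun j => rfl⟩
    obtain ⟨D, hD⟩ : ∃ D : ∀ i,
        (((ιA (i + 1)) →₀ MvPolynomial (Fin n) k) × (((ιB (i + 1)) →₀ MvPolynomial (Fin n) k) ×
          ((LinResAux.Kappa ιC (i + 1)) →₀ MvPolynomial (Fin n) k))) →ₗ[MvPolynomial (Fin n) k]
        (((ιA i) →₀ MvPolynomial (Fin n) k) × (((ιB i) →₀ MvPolynomial (Fin n) k) ×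
          ((LinResAux.Kappa ιC i) →₀ MvPolynomial (Fin n) k))),
        ∀ i v, D i v = (dA i v.1 + φA i v.2.2, dB i v.2.1 + φB i v.2.2, ρ i v.2.2) :=
      ⟨fun i =>
        let R := MvPolynomial (Fin n) k
        let MA := (ιA (i + 1)) →₀ R
        let MB := (ιB (i + 1)) →₀ R
        let MK := (LinResAux.Kappa ιC (i + 1)) →₀ R
        let p1 : (MA × (MB × MK)) →ₗ[R] MA := LinearMap.fst R MA (MB × MK)
        let p2 : (MA × (MB × MK)) →ₗ[R] MB :=
          (LinearMap.fst R MB MK).comp (LinearMap.snd R MA (MB × MK))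
        let p3 : (MA × (MB × MK)) →ₗ[R] MK :=
          (LinearMap.snd R MB MK).comp (LinearMap.snd R MA (MB × MK))
        LinearMap.prod ((dA i).comp p1 + (φA i).comp p3)
          (LinearMap.prod ((dB i).comp p2 + (φB i).comp p3) ((ρ i).comp p3)),
        fun i v => rfl⟩
    obtain ⟨ε₀, hε₀⟩ : ∃ ε₀ : (((ιA 0) →₀ MvPolynomial (Fin n) k) ×
          (((ιB 0) →₀ MvPolynomial (Fin n) k) ×
          ((LinResAux.Kappa ιC 0) →₀ MvPolynomial (Fin n) k))) →ₗ[MvPolynomial (Fin n) k]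
          MvPolynomial (Fin n) k,
        ∀ v, ε₀ v = εA v.1 - εB v.2.1 :=
      ⟨let R := MvPolynomial (Fin n) k
       let MA := (ιA 0) →₀ R
       let MB := (ιB 0) →₀ R
       let MK := (LinResAux.Kappa ιC 0) →₀ R
       εA.comp (LinearMap.fst R MA (MB × MK)) -
        εB.comp ((LinearMap.fst R MB MK).comp (LinearMap.snd R MA (MB × MK))), fun v => rfl⟩
    obtain ⟨E, hEsymm⟩ : ∃ E : ∀ i,
        ((ιA i ⊕ (ιB i ⊕ LinResAux.Kappa ιC i)) →₀ MvPolynomial (Fin n) k) ≃ₗ[MvPolynomial (Fin n) k]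
        (((ιA i) →₀ MvPolynomial (Fin n) k) × (((ιB i) →₀ MvPolynomial (Fin n) k) ×
          ((LinResAux.Kappa ιC i) →₀ MvPolynomial (Fin n) k))),
        ∀ i p (j : ιA i ⊕ (ιB i ⊕ LinResAux.Kappa ιC i)), ((E i).symm p) j =
          (Sum.casesOn j (fun a => p.1 a)
            (fun y => Sum.casesOn y (fun b => p.2.1 b) (fun c => p.2.2 c))) :=
      ⟨fun i => (Finsupp.sumFinsuppLEquivProdFinsupp (MvPolynomial (Fin n) k)).trans
        ((LinearEquiv.refl (MvPolynomial (Fin n) k) _).prodCongr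
          (Finsupp.sumFinsuppLEquivProdFinsupp (MvPolynomial (Fin n) k))),
        fun i p j => by
          rcases j with a | b | c
          · rfl
          · rfl
          · rfl⟩
    have hE1 : ∀ i (a : ιA i), E i (Finsupp.single (Sum.inl a) (1 : MvPolynomial (Fin n) k)) =
        (Finsupp.single a 1, 0, 0) := by
      intro i a
      rw [← LinearEquiv.eq_symm_apply]
      refine Finsupp.ext fun j => ?_
      rw [hEsymm]
      rcases j with a' | b' | c'
      · dsimp only
        simp [Finsupp.single_apply]
      · dsimp only
        simp [Finsupp.single_apply]
      · dsimp only
        simp [Finsupp.single_apply]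
    have hE2 : ∀ i (b : ιB i), E i (Finsupp.single (Sum.inr (Sum.inl b)) (1 : MvPolynomial (Fin n) k)) =
        (0, Finsupp.single b 1, 0) := by
      intro i b
      rw [← LinearEquiv.eq_symm_apply]
      refine Finsupp.ext fun j => ?_
      rw [hEsymm]
      rcases j with a' | b' | c'
      · dsimp only
        simp [Finsupp.single_apply]
      · dsimp only
        simp [Finsupp.single_apply]
      · dsimp only
        simp [Finsupp.single_apply]
    have hE3 : ∀ i (c : LinResAux.Kappa ιC i),
        E i (Finsupp.single (Sum.inr (Sum.inr c)) (1 : MvPolynomial (Fin n) k)) =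
        (0, 0, Finsupp.single c 1) := by
      intro i c
      rw [← LinearEquiv.eq_symm_apply]
      refine Finsupp.ext fun j => ?_
      rw [hEsymm]
      rcases j with a' | b' | c'
      · dsimp only
        simp [Finsupp.single_apply]
      · dsimp only
        simp [Finsupp.single_apply]
      · dsimp only
        simp [Finsupp.single_apply]
    -- core exactness statements
    have coreR : LinearMap.range ε₀ = I₁ + I₂ := by
      apply le_antisymm
      · rintro x ⟨v, rfl⟩
        rw [hε₀, Submodule.add_eq_sup]
        exact sub_mem (Submodule.mem_sup_left (hA1 ▸ LinearMap.mem_range_self εA v.1))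
          (Submodule.mem_sup_right (hB1 ▸ LinearMap.mem_range_self εB v.2.1))
      · rw [Submodule.add_eq_sup]
        refine sup_le ?_ ?_
        · intro x hx
          rw [← hA1] at hx
          obtain ⟨f, rfl⟩ := hx
          refine ⟨(f, 0, 0), ?_⟩
          rw [hε₀]
          dsimp only
          rw [map_zero, sub_zero]
        · intro x hx
          rw [← hB1] at hx
          obtain ⟨g, rfl⟩ := hx
          refine ⟨(0, -g, 0), ?_⟩
          rw [hε₀]
          dsimp only
          rw [map_zero, map_neg, zero_sub, neg_neg]
    have core1 : LinearMap.range (D 0) = LinearMap.ker ε₀ := by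
      apply le_antisymm
      · rintro x ⟨v, rfl⟩
        rw [LinearMap.mem_ker, hD, hε₀]
        dsimp only
        have e1 : εA (dA 0 v.1) = 0 :=
          LinearMap.mem_ker.mp (hA5 ▸ LinearMap.mem_range_self (dA 0) v.1)
        have e2 : εB (dB 0 v.2.1) = 0 :=
          LinearMap.mem_ker.mp (hB5 ▸ LinearMap.mem_range_self (dB 0) v.2.1)
        have e3 : εA (φA 0 v.2.2) = εC v.2.2 := LinearMap.congr_fun hφA0 v.2.2
        have e4 : εB (φB 0 v.2.2) = εC v.2.2 := LinearMap.congr_fun hφB0 v.2.2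
        simp only [map_add, e1, e2, e3, e4, zero_add]
        exact sub_self _
      · intro v hv
        obtain ⟨f, g, c⟩ := v
        rw [LinearMap.mem_ker, hε₀] at hv
        dsimp only at hv
        have hv' : εA f = εB g := sub_eq_zero.mp hv
        have hmem : εA f ∈ I₁ ⊓ I₂ :=
          ⟨hA1 ▸ LinearMap.mem_range_self εA f, by
            rw [hv']; exact hB1 ▸ LinearMap.mem_range_self εB g⟩
        rw [← hC1] at hmem
        obtain ⟨c₀, hc₀⟩ := hmem
        have hf : f - φA 0 c₀ ∈ LinearMap.ker εA := by
          rw [LinearMap.mem_ker, map_sub,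
            show εA (φA 0 c₀) = εC c₀ from LinearMap.congr_fun hφA0 c₀, hc₀, sub_self]
        rw [← hA5] at hf
        obtain ⟨f', hf'⟩ := hf
        have hg : g - φB 0 c₀ ∈ LinearMap.ker εB := by
          rw [LinearMap.mem_ker, map_sub,
            show εB (φB 0 c₀) = εC c₀ from LinearMap.congr_fun hφB0 c₀, hc₀, ← hv']
          exact sub_self _
        rw [← hB5] at hg
        obtain ⟨g', hg'⟩ := hg
        refine ⟨(f', g', c₀), ?_⟩
        rw [hD]
        dsimp only
        refine Prod.ext ?_ (Prod.ext ?_ ?_)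
        · rw [hf', sub_add_cancel]
        · rw [hg', sub_add_cancel]
        · exact Subsingleton.elim _ _
    have core2 : ∀ i, LinearMap.range (D (i + 1)) = LinearMap.ker (D i) := by
      intro i
      apply le_antisymm
      · rintro x ⟨v, rfl⟩
        obtain ⟨f, g, c⟩ := v
        rw [LinearMap.mem_ker, hD (i + 1), hD i]
        dsimp only
        have t1 : dA i (dA (i + 1) f) = 0 :=
          LinearMap.mem_ker.mp (hA4 i ▸ LinearMap.mem_range_self (dA (i + 1)) f)
        have t2 : dA i (φA (i + 1) c) = φA i (dC i c) := LinearMap.congr_fun (hφAc i) c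
        have t3 : dB i (dB (i + 1) g) = 0 :=
          LinearMap.mem_ker.mp (hB4 i ▸ LinearMap.mem_range_self (dB (i + 1)) g)
        have t4 : dB i (φB (i + 1) c) = φB i (dC i c) := LinearMap.congr_fun (hφBc i) c
        have t5 : ρ i ((dC i) c) = 0 := by
          cases i with
          | zero => exact Subsingleton.elim _ _
          | succ m =>
            rw [hρS m, LinearMap.neg_apply, neg_eq_zero]
            exact LinearMap.mem_ker.mp (hC4 m ▸ LinearMap.mem_range_self (dC (m + 1)) c)
        rw [hρS i]
        simp only [LinearMap.neg_apply, map_add, map_neg, t1, t2, t3, t4, t5, zero_add,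
          add_neg_cancel, neg_zero]
        rfl
      · intro v hv
        obtain ⟨f, g, c⟩ := v
        rw [LinearMap.mem_ker, hD] at hv
        dsimp only at hv
        rw [Prod.ext_iff] at hv
        obtain ⟨h1, hv2⟩ := hv
        rw [Prod.ext_iff] at hv2
        obtain ⟨h2, h3⟩ := hv2
        simp only [Prod.fst_zero, Prod.snd_zero] at h1 h2 h3
        have hcr : c ∈ LinearMap.range (dC i) := by
          cases i with
          | zero =>
            rw [hC5, LinearMap.mem_ker]
            have e3 : εA (φA 0 c) = εC c := LinearMap.congr_fun hφA0 c
            have e1 : εA (dA 0 f) = 0 :=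
              LinearMap.mem_ker.mp (hA5 ▸ LinearMap.mem_range_self (dA 0) f)
            calc εC c = εA (dA 0 f + φA 0 c) := by rw [map_add, e1, zero_add, e3]
              _ = εA 0 := by rw [h1]
              _ = 0 := map_zero εA
          | succ m =>
            rw [hC4 m, LinearMap.mem_ker]
            rw [hρS m, LinearMap.neg_apply] at h3
            exact neg_eq_zero.mp h3
        obtain ⟨c', hc'⟩ := hcr
        have hf2 : f + φA (i + 1) c' ∈ LinearMap.ker (dA i) := by
          rw [LinearMap.mem_ker, map_add,
            show dA i (φA (i + 1) c') = φA i (dC i c') from LinearMap.congr_fun (hφAc i) c',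
            hc']
          exact h1
        rw [← hA4 i] at hf2
        obtain ⟨f', hf'⟩ := hf2
        have hg2 : g + φB (i + 1) c' ∈ LinearMap.ker (dB i) := by
          rw [LinearMap.mem_ker, map_add,
            show dB i (φB (i + 1) c') = φB i (dC i c') from LinearMap.congr_fun (hφBc i) c',
            hc']
          exact h2
        rw [← hB4 i] at hg2
        obtain ⟨g', hg'⟩ := hg2
        refine ⟨(f', g', -c'), ?_⟩
        rw [hD]
        dsimp only
        refine Prod.ext ?_ (Prod.ext ?_ ?_)
        · dsimp only
          rw [map_neg, hf', add_neg_cancel_right]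
        · dsimp only
          rw [map_neg, hg', add_neg_cancel_right]
        · show ρ (i + 1) (-c') = c
          rw [hρS i, LinearMap.neg_apply, map_neg, neg_neg, hc']
    have hEtop : ∀ i, LinearMap.range ((E i).toLinearMap) = ⊤ :=
      fun i => LinearMap.range_eq_top.mpr (E i).surjective
    have hEbot : ∀ i, LinearMap.ker ((E i).symm.toLinearMap) = ⊥ :=
      fun i => LinearMap.ker_eq_bot.mpr (E i).symm.injective
    refine ⟨fun i => (ιA i ⊕ (ιB i ⊕ LinResAux.Kappa ιC i)),
      fun i => ((E i).symm.toLinearMap) ∘ₗ (D i ∘ₗ (E (i + 1)).toLinearMap),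
      ε₀ ∘ₗ (E 0).toLinearMap, ?_, ?_, ?_, ?_, ?_⟩
    · rw [LinearMap.range_comp, hEtop, Submodule.map_top, coreR]
    · intro j
      simp only [LinearMap.comp_apply, LinearEquiv.coe_coe]
      rcases j with a | b | c
      · rw [hE1 0 a, hε₀]
        dsimp only
        rw [map_zero, sub_zero]
        exact hA2 a
      · rw [hE2 0 b, hε₀]
        dsimp only
        rw [map_zero, zero_sub]
        exact LinResAux.isHom_neg (hB2 b)
      · cases c
    · intro i j j'
      simp only [LinearMap.comp_apply, LinearEquiv.coe_coe]
      rcases j with a | b | c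
      · rw [hE1 (i + 1) a,
          show D i ((Finsupp.single a 1, 0, 0)) = (dA i (Finsupp.single a 1), 0, 0) by
            rw [hD]; dsimp only; simp only [map_zero, add_zero, zero_add],
          hEsymm]
        rcases j' with a' | b' | c'
        · exact hA3 i a a'
        · exact LinResAux.isHomZero
        · exact LinResAux.isHomZero
      · rw [hE2 (i + 1) b,
          show D i ((0, Finsupp.single b 1, 0)) = (0, dB i (Finsupp.single b 1), 0) by
            rw [hD]; dsimp only; simp only [map_zero, add_zero, zero_add],
          hEsymm]
        rcases j' with a' | b' | c'
        · exact LinResAux.isHomZero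
        · exact hB3 i b b'
        · exact LinResAux.isHomZero
      · rw [hE3 (i + 1) c,
          show D i ((0, 0, Finsupp.single c 1)) =
            (φA i (Finsupp.single c 1), φB i (Finsupp.single c 1), ρ i (Finsupp.single c 1)) by
            rw [hD]; dsimp only; simp only [map_zero, add_zero, zero_add],
          hEsymm]
        rcases j' with a' | b' | x
        · exact hφAh i c a'
        · exact hφBh i c b'
        · dsimp only
          cases i with
          | zero => cases x
          | succ m =>
            rw [hρS m]
            simp only [LinearMap.neg_apply, Finsupp.coe_neg, Pi.neg_apply]
            exact LinResAux.isHom_neg (hC3 m c x)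
    · intro i
      rw [LinearMap.range_comp, LinearMap.range_comp, hEtop, Submodule.map_top,
        LinearMap.ker_comp, hEbot, Submodule.comap_bot, LinearMap.ker_comp, core2 i,
        LinResAux.map_symm_eq_comap]
    · rw [LinearMap.range_comp, LinearMap.range_comp, hEtop, Submodule.map_top,
        LinearMap.ker_comp, core1, LinResAux.map_symm_eq_comap]
end

section
/- Let I be a constructible monomial ideal of S = k[x_1,…,x_n]. Then the polarization I^p of I is a square-free constructible monomial ideal (in the larger polynomial ring containing all the polarized variables). -/
open MvPolynomial

/-- `I` is generated by square-free monomials. -/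
def IsSquarefreeMonomialIdeal (k : Type) [Field k] {σ : Type}
    (I : Ideal (MvPolynomial σ k)) : Prop :=
  ∃ G : Set (σ →₀ ℕ), (∀ b ∈ G, ∀ i, b i ≤ 1) ∧
    I = Ideal.span ((fun b => monomial b (1 : k)) '' G)

/-- The exponent vectors of the minimal monomial generators of a monomial ideal `I`:
those `b` with `x^b ∈ I` such that no proper monomial divisor of `x^b` lies in `I`. -/
def minGenExps (n : ℕ) (k : Type) [Field k] (I : Ideal (MvPolynomial (Fin n) k)) :
    Set (Fin n →₀ ℕ) :=
  {b | monomial b (1 : k) ∈ I ∧ ∀ b' : Fin n →₀ ℕ, b' < b → monomial b' (1 : k) ∉ I}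

/-- The polarization of the exponent vector `b`: the square-free exponent vector of
`u^p = ∏_{i=1}^n ∏_{j=1}^{b i} x_{ij}` in the polynomial ring on the variables `x_{ij}`. -/
noncomputable def polarizeExp (n : ℕ) (b : Fin n →₀ ℕ) : (Fin n × ℕ) →₀ ℕ :=
  ∑ i : Fin n, ∑ j ∈ Finset.range (b i), Finsupp.single (i, j) 1

/-- The polarization `I^p` of a monomial ideal `I`: the ideal of the polynomial ring
`k[x_{ij}]` generated by the polarizations of the minimal monomial generators of `I`. -/
noncomputable def polarizeIdeal (n : ℕ) (k : Type) [Field k]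
    (I : Ideal (MvPolynomial (Fin n) k)) : Ideal (MvPolynomial (Fin n × ℕ) k) :=
  Ideal.span ((fun b => monomial (polarizeExp n b) (1 : k)) '' minGenExps n k I)

/-! ### Auxiliary lemmas -/

lemma polarizeExp_apply (n : ℕ) (b : Fin n →₀ ℕ) (i : Fin n) (j : ℕ) :
    polarizeExp n b (i, j) = if j < b i then 1 else 0 := by
  classical
  simp only [polarizeExp, Finsupp.finset_sum_apply, Finsupp.single_apply, Prod.mk.injEq]
  rw [Finset.sum_eq_single i]
  · simp [Finset.sum_ite_eq', Finset.mem_range]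
  · intro i' _ hi'; simp [hi']
  · simp

lemma polarizeExp_mono {n : ℕ} {a b : Fin n →₀ ℕ} (h : a ≤ b) :
    polarizeExp n a ≤ polarizeExp n b := by
  rw [Finsupp.le_def]
  rintro ⟨i, j⟩
  rw [polarizeExp_apply, polarizeExp_apply]
  have := h i
  split_ifs <;> omega

lemma polarizeExp_sup {n : ℕ} (a b : Fin n →₀ ℕ) :
    polarizeExp n (a ⊔ b) = polarizeExp n a ⊔ polarizeExp n b := by
  ext ⟨i, j⟩
  simp only [Finsupp.sup_apply, polarizeExp_apply, max_def]
  split_ifs <;> omega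

lemma polarizeExp_degree (n : ℕ) (b : Fin n →₀ ℕ) :
    (polarizeExp n b).sum (fun _ e => e) = b.sum (fun _ e => e) := by
  classical
  rw [polarizeExp, ← Finsupp.sum_finset_sum_index (by simp) (by intros; simp)]
  rw [Finsupp.sum_fintype _ _ (by simp)]
  refine Finset.sum_congr rfl fun i _ => ?_
  rw [← Finsupp.sum_finset_sum_index (by simp) (by intros; simp)]
  simp [Finsupp.sum_single_index]

/-- Membership of a monomial in a monomial ideal. -/
lemma monomial_mem_span {σ : Type} {k : Type} [Field k] {G : Set (σ →₀ ℕ)} {c : σ →₀ ℕ} :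
    monomial c (1 : k) ∈ Ideal.span ((fun b => monomial b (1 : k)) '' G) ↔ ∃ b ∈ G, b ≤ c := by
  classical
  rw [mem_ideal_span_monomial_image]
  constructor
  · intro h
    exact h c (by simp [mem_support_iff, coeff_monomial])
  · rintro ⟨b, hb, hle⟩ xi hxi
    rw [support_monomial] at hxi
    simp only [one_ne_zero, if_false, Finset.mem_singleton] at hxi
    exact ⟨b, hb, hxi ▸ hle⟩

/-- Intersection of two monomial ideals. -/
lemma span_inf {σ : Type} {k : Type} [Field k] (G₁ G₂ : Set (σ →₀ ℕ)) :
    Ideal.span ((fun b => monomial b (1 : k)) '' G₁) ⊓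
        Ideal.span ((fun b => monomial b (1 : k)) '' G₂) =
      Ideal.span ((fun b => monomial b (1 : k)) '' Set.image2 (· ⊔ ·) G₁ G₂) := by
  ext x
  simp only [Ideal.mem_inf, mem_ideal_span_monomial_image]
  constructor
  · rintro ⟨h1, h2⟩ xi hxi
    obtain ⟨b1, hb1, hle1⟩ := h1 xi hxi
    obtain ⟨b2, hb2, hle2⟩ := h2 xi hxi
    exact ⟨b1 ⊔ b2, Set.mem_image2_of_mem hb1 hb2, sup_le hle1 hle2⟩
  · intro h
    constructor <;> intro xi hxi <;>
      obtain ⟨c, hc, hle⟩ := h xi hxi <;>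
      obtain ⟨b1, hb1, b2, hb2, rfl⟩ := hc
    · exact ⟨b1, hb1, le_trans le_sup_left hle⟩
    · exact ⟨b2, hb2, le_trans le_sup_right hle⟩

/-- The key lemma: the polarization of a monomial ideal spanned by the monomials with
exponents in `G` is spanned by the monomials with polarized exponents in `G`. -/
lemma polarizeIdeal_span {n : ℕ} {k : Type} [Field k] (G : Set (Fin n →₀ ℕ)) :
    polarizeIdeal n k (Ideal.span ((fun b => monomial b (1 : k)) '' G)) =
      Ideal.span ((fun b => monomial b (1 : k)) '' (polarizeExp n '' G)) := by
  set I := Ideal.span ((fun b => monomial b (1 : k)) '' G) with hI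
  have himg : (fun b => monomial (polarizeExp n b) (1 : k)) '' minGenExps n k I =
      (fun b => monomial b (1 : k)) '' (polarizeExp n '' minGenExps n k I) := by
    rw [Set.image_image]
  rw [polarizeIdeal, himg]
  apply le_antisymm
  · rw [Ideal.span_le]
    rintro _ ⟨_, ⟨m, hm, rfl⟩, rfl⟩
    obtain ⟨g, hg, hgle⟩ := monomial_mem_span.mp hm.1
    exact monomial_mem_span.mpr ⟨polarizeExp n g, ⟨g, hg, rfl⟩, polarizeExp_mono hgle⟩
  · rw [Ideal.span_le]
    rintro _ ⟨_, ⟨g, hg, rfl⟩, rfl⟩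
    obtain ⟨m, hmS, hmin⟩ := (wellFounded_lt (α := Fin n →₀ ℕ)).has_min
      {c | c ≤ g ∧ monomial c (1 : k) ∈ I}
      ⟨g, le_refl g, monomial_mem_span.mpr ⟨g, hg, le_refl g⟩⟩
    have hmem : m ∈ minGenExps n k I :=
      ⟨hmS.2, fun b' hb' hb'I => hmin b' ⟨hb'.le.trans hmS.1, hb'I⟩ hb'⟩
    exact monomial_mem_span.mpr ⟨polarizeExp n m, ⟨m, hmem, rfl⟩, polarizeExp_mono hmS.1⟩

lemma sqfree_polarized {n : ℕ} {k : Type} [Field k] (G : Set (Fin n →₀ ℕ)) :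
    IsSquarefreeMonomialIdeal k
      (Ideal.span ((fun b => monomial b (1 : k)) '' (polarizeExp n '' G))) := by
  refine ⟨polarizeExp n '' G, ?_, rfl⟩
  rintro _ ⟨b, -, rfl⟩ ⟨i, j⟩
  rw [polarizeExp_apply]
  split_ifs <;> simp

lemma exists_gens {σ : Type} {k : Type} [Field k] (I : Ideal (MvPolynomial σ k)) (q : ℕ)
    (h : IsConstructibleIdeal k I q) :
    ∃ G : Set (σ →₀ ℕ), I = Ideal.span ((fun b => monomial b (1 : k)) '' G) := by
  induction h with
  | principal b => exact ⟨{b}, by simp⟩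
  | sum I₁ I₂ q h1 h2 h3 ih1 ih2 ih3 =>
    obtain ⟨G₁, rfl⟩ := ih1
    obtain ⟨G₂, rfl⟩ := ih2
    refine ⟨G₁ ∪ G₂, ?_⟩
    rw [Set.image_union, Ideal.span_union, Submodule.add_eq_sup]

/-- The polarization of a constructible monomial ideal is a square-free constructible
monomial ideal (in the larger polynomial ring on the variables `x_{ij}`). -/
theorem polarization_of_constructible (n : ℕ) (k : Type) [Field k]
    (I : Ideal (MvPolynomial (Fin n) k)) (q : ℕ)
    (h : IsConstructibleIdeal k I q) :
    IsConstructibleIdeal k (polarizeIdeal n k I) q ∧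
      IsSquarefreeMonomialIdeal k (polarizeIdeal n k I) := by
  induction h with
  | principal b =>
    have hb : Ideal.span {monomial b (1 : k)} =
        Ideal.span ((fun b => monomial b (1 : k)) '' ({b} : Set (Fin n →₀ ℕ))) := by simp
    rw [hb, polarizeIdeal_span]
    constructor
    · have hp := IsConstructibleIdeal.principal (k := k) (σ := Fin n × ℕ) (polarizeExp n b)
      rw [polarizeExp_degree] at hp
      convert hp using 2
      simp
    · exact sqfree_polarized _
  | sum I₁ I₂ q h1 h2 h3 ih1 ih2 ih3 =>
    obtain ⟨G₁, hG₁⟩ := exists_gens I₁ q h1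
    obtain ⟨G₂, hG₂⟩ := exists_gens I₂ q h2
    have hsum : I₁ + I₂ = Ideal.span ((fun b => monomial b (1 : k)) '' (G₁ ∪ G₂)) := by
      rw [hG₁, hG₂, Set.image_union, Ideal.span_union, Submodule.add_eq_sup]
    have himg2 : polarizeExp n '' Set.image2 (· ⊔ ·) G₁ G₂ =
        Set.image2 (· ⊔ ·) (polarizeExp n '' G₁) (polarizeExp n '' G₂) := by
      rw [Set.image_image2, Set.image2_image_left, Set.image2_image_right]
      exact Set.image2_congr fun a _ b _ => polarizeExp_sup a b
    have e1 : polarizeIdeal n k (I₁ + I₂) = polarizeIdeal n k I₁ + polarizeIdeal n k I₂ := by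
      rw [hsum, polarizeIdeal_span, hG₁, hG₂, polarizeIdeal_span, polarizeIdeal_span,
        Set.image_union, Set.image_union, Ideal.span_union, Submodule.add_eq_sup]
    have e2 : polarizeIdeal n k (I₁ ⊓ I₂) = polarizeIdeal n k I₁ ⊓ polarizeIdeal n k I₂ := by
      rw [hG₁, hG₂, span_inf, polarizeIdeal_span, polarizeIdeal_span, polarizeIdeal_span,
        span_inf, himg2]
    constructor
    · rw [e1]
      exact IsConstructibleIdeal.sum _ _ q ih1.1 ih2.1 (e2 ▸ ih3.1)
    · rw [hsum, polarizeIdeal_span]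
      exact sqfree_polarized _
end
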